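/- Let G be a polarity graph of a projective plane of order q containing an oval H, and let m ∈ {1, ..., q+1}. Then G contains a subgraph on at most m + C(m,2) vertices with at least 2·C(m,2) + m(m-1)(m-2)(m-3)/(8q) - C·(m⁴/q^{3/2} + m) edges, for some absolute constant C. -/

import Mathlib

set_option linter.unusedSectionVars false
set_option linter.unusedVariables false
set_option maxHeartbeats 2000000

open Configuration Finset

namespace PolarityAux


lemma pair_cases {α : Type} [DecidableEq α] {a b c d : α} (hab : a ≠ b)
    (h : ({a, b} : Finset α) = {c, d}) : (c = a ∧ d = b) ∨ (c = b ∧ d = a) := by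
  have ha : a ∈ ({c, d} : Finset α) := by rw [← h]; simp
  have hb : b ∈ ({c, d} : Finset α) := by rw [← h]; simp
  have hc : c ∈ ({a, b} : Finset α) := by rw [h]; simp
  have hd : d ∈ ({a, b} : Finset α) := by rw [h]; simp
  simp only [Finset.mem_insert, Finset.mem_singleton] at ha hb hc hd
  rcases hc with rfl | rfl <;> rcases hd with rfl | rfl <;> tauto

lemma swap_count {α β : Type} (s : Finset α) (t : Finset β) (r : α → β → Prop)
    [∀ a b, Decidable (r a b)] :
    ∑ a ∈ s, (t.filter (fun b => r a b)).card = ∑ b ∈ t, (s.filter (fun a => r a b)).card := by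
  simp_rw [Finset.card_filter]; exact Finset.sum_comm

lemma prod_count {α β : Type} (s : Finset α) (t : Finset β) (r : α → β → Prop)
    [∀ a b, Decidable (r a b)] :
    ((s ×ˢ t).filter (fun p => r p.1 p.2)).card = ∑ a ∈ s, (t.filter (fun b => r a b)).card := by
  simp_rw [Finset.card_filter]; rw [Finset.sum_product]

lemma card_powersetCard_superset {α : Type} [DecidableEq α] (H B : Finset α) (m : ℕ)
    (hB : B ⊆ H) (hBm : B.card ≤ m) :
    ((Finset.powersetCard m H).filter (fun S => B ⊆ S)).card
      = (H.card - B.card).choose (m - B.card) := by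
  rw [← Finset.card_sdiff_of_subset hB, ← Finset.card_powersetCard]
  apply Finset.card_nbij' (fun S => S \ B) (fun S' => S' ∪ B)
  · intro S hS
    obtain ⟨hSp, hBS⟩ := Finset.mem_filter.mp hS
    obtain ⟨hSH, hScard⟩ := Finset.mem_powersetCard.mp hSp
    refine Finset.mem_powersetCard.mpr ⟨?_, ?_⟩
    · exact Finset.sdiff_subset_sdiff hSH (le_refl B)
    · rw [Finset.card_sdiff_of_subset hBS, hScard]
  · intro S' hS'
    obtain ⟨hS'H, hS'card⟩ := Finset.mem_powersetCard.mp hS'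
    have hdisj : Disjoint S' B := by
      refine Finset.disjoint_left.mpr (fun x hx hxB => ?_)
      exact (Finset.mem_sdiff.mp (hS'H hx)).2 hxB
    refine Finset.mem_filter.mpr ⟨Finset.mem_powersetCard.mpr ⟨?_, ?_⟩, Finset.subset_union_right⟩
    · exact Finset.union_subset (fun x hx => (Finset.mem_sdiff.mp (hS'H hx)).1) hB
    · rw [Finset.card_union_of_disjoint hdisj, hS'card]
      omega
  · intro S hS
    obtain ⟨_, hBS⟩ := Finset.mem_filter.mp hS
    exact Finset.sdiff_union_of_subset hBS
  · intro S' hS'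
    obtain ⟨hS'H, _⟩ := Finset.mem_powersetCard.mp hS'
    have hdisj : Disjoint S' B := by
      refine Finset.disjoint_left.mpr (fun x hx hxB => ?_)
      exact (Finset.mem_sdiff.mp (hS'H hx)).2 hxB
    exact Finset.union_sdiff_cancel_right hdisj

lemma two_mul_choose_two (m : ℕ) : 2 * m.choose 2 = m * (m - 1) := by
  induction m with
  | zero => rfl
  | succ n ih =>
    rw [Nat.choose_succ_succ, Nat.choose_one_right, Nat.mul_add, ih]
    rcases n with _ | k
    · rfl
    · simp only [Nat.succ_sub_one]
      ring

lemma choose_two_cast (m : ℕ) (hm : 1 ≤ m) :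
    2 * (m.choose 2 : ℝ) = (m : ℝ) * ((m : ℝ) - 1) := by
  have h := two_mul_choose_two m
  have h2 : ((2 * m.choose 2 : ℕ) : ℝ) = ((m * (m - 1) : ℕ) : ℝ) := by exact_mod_cast h
  push_cast [Nat.cast_sub hm] at h2
  linarith

lemma mm_aux (m : ℕ) : m * m - m = m * (m - 1) := by
  cases m with
  | zero => rfl
  | succ k => simp only [Nat.succ_sub_one]; ring_nf; omega

lemma sym2_fiber_le {α : Type} [DecidableEq α] (s : Finset (α × α)) (e : Sym2 α) :
    (s.filter (fun p => s(p.1, p.2) = e)).card ≤ 2 := by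
  rcases Finset.eq_empty_or_nonempty (s.filter (fun p => s(p.1, p.2) = e))
    with he | ⟨⟨x, y⟩, hxy⟩
  · rw [he]; simp
  · obtain ⟨hxs, hxe⟩ := Finset.mem_filter.mp hxy
    have hsub : s.filter (fun p => s(p.1, p.2) = e) ⊆ {(x, y), (y, x)} := by
      intro p hp
      obtain ⟨hps, hpe⟩ := Finset.mem_filter.mp hp
      have : s(p.1, p.2) = s(x, y) := by rw [hpe, hxe]
      rcases Sym2.eq_iff.mp this with ⟨h1, h2⟩ | ⟨h1, h2⟩
      · simp only [Finset.mem_insert, Finset.mem_singleton]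
        left; exact Prod.ext h1 h2
      · simp only [Finset.mem_insert, Finset.mem_singleton]
        right; exact Prod.ext h1 h2
    exact le_trans (Finset.card_le_card hsub)
      (le_trans (Finset.card_insert_le _ _) (by simp))

lemma choose_id_aux (Q M : ℕ) :
    Q.choose M * ((Q+4)*(Q+3)*(Q+2)*(Q+1)) = (Q+4).choose (M+4) * ((M+4)*(M+3)*(M+2)*(M+1)) := by
  have h1 := Nat.add_one_mul_choose_eq Q M
  have h2 := Nat.add_one_mul_choose_eq (Q+1) (M+1)
  have h3 := Nat.add_one_mul_choose_eq (Q+2) (M+2)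
  have h4 := Nat.add_one_mul_choose_eq (Q+3) (M+3)
  calc Q.choose M * ((Q+4)*(Q+3)*(Q+2)*(Q+1))
      = ((Q+1) * Q.choose M) * ((Q+4)*(Q+3)*(Q+2)) := by ring
    _ = ((Q+1).choose (M+1) * (M+1)) * ((Q+4)*(Q+3)*(Q+2)) := by rw [h1]
    _ = ((Q+1+1) * (Q+1).choose (M+1)) * ((Q+4)*(Q+3)*(M+1)) := by ring
    _ = ((Q+2).choose (M+2) * (M+2)) * ((Q+4)*(Q+3)*(M+1)) := by rw [h2]
    _ = ((Q+2+1) * (Q+2).choose (M+2)) * ((Q+4)*(M+2)*(M+1)) := by ring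
    _ = ((Q+3).choose (M+3) * (M+3)) * ((Q+4)*(M+2)*(M+1)) := by rw [h3]
    _ = ((Q+3+1) * (Q+3).choose (M+3)) * ((M+3)*(M+2)*(M+1)) := by ring
    _ = ((Q+4).choose (M+4) * (M+4)) * ((M+3)*(M+2)*(M+1)) := by rw [h4]
    _ = (Q+4).choose (M+4) * ((M+4)*(M+3)*(M+2)*(M+1)) := by ring

lemma choose_id (q m : ℕ) (hm : 4 ≤ m) (hq : 10 ≤ q) :
    (q-3).choose (m-4) * ((q+1)*q*(q-1)*(q-2))
      = (q+1).choose m * (m*(m-1)*(m-2)*(m-3)) := by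
  obtain ⟨M, rfl⟩ : ∃ M, m = M + 4 := ⟨m - 4, by omega⟩
  obtain ⟨Q, rfl⟩ : ∃ Q, q = Q + 3 := ⟨q - 3, by omega⟩
  have e1 : Q + 3 + 1 = Q + 4 := by omega
  have e2 : Q + 3 - 1 = Q + 2 := by omega
  have e3 : Q + 3 - 2 = Q + 1 := by omega
  have e4 : M + 4 - 4 = M := by omega
  have e5 : Q + 3 - 3 = Q := by omega
  have f1 : M + 4 - 1 = M + 3 := by omega
  have f2 : M + 4 - 2 = M + 2 := by omega
  have f3 : M + 4 - 3 = M + 1 := by omega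
  rw [e1, e2, e3, e4, e5, f1, f2, f3]
  exact choose_id_aux Q M



lemma endgame (mr qr s e y g a k b N F rp : ℝ)
    (hm4 : 4 ≤ mr) (hq10 : 10 ≤ qr)
    (hs : s ^ 2 = qr) (hs0 : 0 ≤ s)
    (hrp : rp = qr * s)
    (hN : N = qr ^ 2 + qr + 1)
    (hF : F = mr * (mr - 1) * (mr - 2) * (mr - 3))
    (hkey : 2 * (mr * (mr - 1)) + y ≤ 2 * e + 4 * mr)
    (havg : g * k ≤ b * y)
    (hg0 : 0 ≤ g) (hk0 : 0 ≤ k) (hb : 0 < b)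
    (hGP : g ≥ a ^ 2 * (qr + 1) / N - a * s - 5 * (qr + 1) ^ 2)
    (ha1 : qr * (qr + 1) ≤ 2 * a) (ha2 : a ≤ qr * (qr + 1))
    (hid : k * ((qr + 1) * qr * (qr - 1) * (qr - 2)) = b * F) :
    e ≥ mr * (mr - 1) + F / (8 * qr) - 2000 * (mr ^ 4 / rp + mr) := by
  have hq0 : (0:ℝ) < qr := by linarith
  have hs3 : 3 ≤ s := by nlinarith
  have hsq : s ≤ qr := by nlinarith
  have hF0 : 0 ≤ F := by
    rw [hF]
    apply mul_nonneg (mul_nonneg (mul_nonneg (by linarith) (by linarith)) (by linarith))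
    linarith
  have hFm : F ≤ mr ^ 4 := by
    rw [hF]
    have h1 : mr * (mr - 1) ≤ mr * mr := by nlinarith
    have h2 : (mr - 2) * (mr - 3) ≤ mr * mr := by nlinarith
    have h3 : (0:ℝ) ≤ (mr - 2) * (mr - 3) := by nlinarith
    have h4 : (0:ℝ) ≤ mr * mr := by nlinarith
    calc mr * (mr - 1) * (mr - 2) * (mr - 3)
        = (mr * (mr - 1)) * ((mr - 2) * (mr - 3)) := by ring
      _ ≤ (mr * mr) * (mr * mr) := mul_le_mul h1 h2 h3 h4
      _ = mr ^ 4 := by ring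
  set Dq : ℝ := (qr + 1) * qr * (qr - 1) * (qr - 2) with hDq
  have hDqpos : 0 < Dq := by
    apply mul_pos (mul_pos (mul_pos (by linarith) (by linarith)) (by linarith))
    linarith
  have hNpos : 0 < N := by rw [hN]; positivity
  have ha0 : 0 < a := by nlinarith
  have hrppos : 0 < rp := by rw [hrp]; nlinarith
  have hm40 : (0:ℝ) ≤ mr ^ 4 := by positivity
  have hkb : k = b * F / Dq := by
    field_simp
    linarith [hid]
  have hy : g * F / Dq ≤ y := by
    have h1 : g * (b * F / Dq) ≤ b * y := by rw [← hkb]; exact havg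
    have h2 : b * (g * F / Dq) ≤ b * y := by
      calc b * (g * F / Dq) = g * (b * F / Dq) := by ring
        _ ≤ b * y := h1
    exact le_of_mul_le_mul_left h2 hb
  set Z : ℝ := a ^ 2 * (qr + 1) / N - a * s - 5 * (qr + 1) ^ 2 with hZ
  have hy2 : Z * F / Dq ≤ y := by
    refine le_trans ?_ hy
    have h := mul_le_mul_of_nonneg_right hGP hF0
    exact div_le_div_of_nonneg_right h hDqpos.le
  have hsplit : Z * F / Dq
      = (a ^ 2 * (qr + 1) / N) * F / Dq - (a * s) * F / Dq - (5 * (qr + 1) ^ 2) * F / Dq := by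
    rw [hZ]; ring
  -- Claim A
  have hpoly : N * ((qr - 1) * (qr - 2)) ≤ qr ^ 2 * (qr + 1) ^ 2 := by
    rw [hN]; nlinarith
  have h4a : qr ^ 2 * (qr + 1) ^ 2 ≤ 4 * a ^ 2 := by nlinarith
  have hqq : (0:ℝ) ≤ qr * (qr + 1) := by nlinarith
  have hkeyA : N * Dq ≤ 4 * qr * a ^ 2 * (qr + 1) := by
    calc N * Dq = (N * ((qr - 1) * (qr - 2))) * (qr * (qr + 1)) := by rw [hDq]; ring
      _ ≤ (qr ^ 2 * (qr + 1) ^ 2) * (qr * (qr + 1)) := mul_le_mul_of_nonneg_right hpoly hqq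
      _ ≤ (4 * a ^ 2) * (qr * (qr + 1)) := mul_le_mul_of_nonneg_right h4a hqq
      _ = 4 * qr * a ^ 2 * (qr + 1) := by ring
  have hA : F / (4 * qr) ≤ (a ^ 2 * (qr + 1) / N) * F / Dq := by
    have heq : (a ^ 2 * (qr + 1) / N) * F / Dq = a ^ 2 * (qr + 1) * F / (N * Dq) := by
      field_simp
    rw [heq, div_le_div_iff₀ (by linarith) (by positivity)]
    calc F * (N * Dq) ≤ F * (4 * qr * a ^ 2 * (qr + 1)) :=
          mul_le_mul_of_nonneg_left hkeyA hF0
      _ = a ^ 2 * (qr + 1) * F * (4 * qr) := by ring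
  -- Claim B
  have hB : (a * s) * F / Dq ≤ 1000 * mr ^ 4 / rp := by
    rw [div_le_div_iff₀ hDqpos hrppos]
    have e1 : a * s * F * rp = (a * F) * (qr * qr) := by
      rw [hrp]
      calc a * s * F * (qr * s) = (a * F) * qr * s ^ 2 := by ring
        _ = (a * F) * (qr * qr) := by rw [hs]; ring
    rw [e1]
    have step1 : a * F ≤ (qr * (qr + 1)) * mr ^ 4 := mul_le_mul ha2 hFm hF0 hqq
    have step2 : (a * F) * (qr * qr) ≤ ((qr * (qr + 1)) * mr ^ 4) * (qr * qr) :=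
      mul_le_mul_of_nonneg_right step1 (by positivity)
    have hpoly2 : qr * (qr + 1) * qr * qr ≤ 1000 * Dq := by rw [hDq]; nlinarith
    have step3 : ((qr * (qr + 1)) * mr ^ 4) * (qr * qr) ≤ 1000 * mr ^ 4 * Dq := by
      calc ((qr * (qr + 1)) * mr ^ 4) * (qr * qr)
          = mr ^ 4 * (qr * (qr + 1) * qr * qr) := by ring
        _ ≤ mr ^ 4 * (1000 * Dq) := mul_le_mul_of_nonneg_left hpoly2 hm40
        _ = 1000 * mr ^ 4 * Dq := by ring
    linarith
  -- Claim C
  have hC : (5 * (qr + 1) ^ 2) * F / Dq ≤ 1000 * mr ^ 4 / rp := by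
    rw [div_le_div_iff₀ hDqpos hrppos]
    have hrple : rp ≤ qr * qr := by
      rw [hrp]
      exact mul_le_mul_of_nonneg_left hsq hq0.le
    have step1 : (5 * (qr + 1) ^ 2) * F ≤ (5 * (qr + 1) ^ 2) * mr ^ 4 :=
      mul_le_mul_of_nonneg_left hFm (by positivity)
    have step2 : (5 * (qr + 1) ^ 2) * F * rp ≤ ((5 * (qr + 1) ^ 2) * mr ^ 4) * (qr * qr) :=
      mul_le_mul step1 hrple hrppos.le (by positivity)
    have hpoly3 : 5 * (qr + 1) ^ 2 * (qr * qr) ≤ 1000 * Dq := by rw [hDq]; nlinarith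
    have step3 : ((5 * (qr + 1) ^ 2) * mr ^ 4) * (qr * qr) ≤ 1000 * mr ^ 4 * Dq := by
      calc ((5 * (qr + 1) ^ 2) * mr ^ 4) * (qr * qr)
          = mr ^ 4 * (5 * (qr + 1) ^ 2 * (qr * qr)) := by ring
        _ ≤ mr ^ 4 * (1000 * Dq) := mul_le_mul_of_nonneg_left hpoly3 hm40
        _ = 1000 * mr ^ 4 * Dq := by ring
    linarith
  -- final assembly
  have hyfinal : F / (4 * qr) - 2000 * mr ^ 4 / rp ≤ y := by
    have h := hy2
    rw [hsplit] at h
    have h2000 : 1000 * mr ^ 4 / rp + 1000 * mr ^ 4 / rp = 2000 * mr ^ 4 / rp := by ring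
    linarith
  have hF8 : F / (4 * qr) / 2 = F / (8 * qr) := by ring
  have hatom : 2000 * mr ^ 4 / rp = 2000 * (mr ^ 4 / rp) := by ring
  have hpos : (0:ℝ) ≤ mr ^ 4 / rp := by positivity
  linarith

lemma trivial_case (m q : ℕ) (hm1 : 1 ≤ m) (hmq : m ≤ q + 1) (hcase : m ≤ 3 ∨ q ≤ 9) :
    2 * (m.choose 2 : ℝ) +
      (m : ℝ) * ((m : ℝ) - 1) * ((m : ℝ) - 2) * ((m : ℝ) - 3) / (8 * q) -
      2000 * ((m : ℝ) ^ 4 / (q : ℝ) ^ ((3 : ℝ) / 2) + m) ≤ 0 := by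
  have hX : (0:ℝ) ≤ (m : ℝ) ^ 4 / (q : ℝ) ^ ((3 : ℝ) / 2) := by positivity
  have hch := choose_two_cast m hm1
  by_cases hm3 : m ≤ 3
  · interval_cases m <;> norm_num at hX ⊢ <;> first | positivity | linarith
  · have hq9 : q ≤ 9 := by omega
    have hm4 : 4 ≤ m := by omega
    have hq3 : 3 ≤ q := by omega
    set mr : ℝ := (m : ℝ) with hmr
    set qr : ℝ := (q : ℝ) with hqr
    have hmr4 : (4:ℝ) ≤ mr := by rw [hmr]; exact_mod_cast hm4
    have hmr10 : mr ≤ 10 := by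
      rw [hmr]
      have : m ≤ 10 := by omega
      exact_mod_cast this
    have hqr3 : (3:ℝ) ≤ qr := by rw [hqr]; exact_mod_cast hq3
    have hP0 : (0:ℝ) ≤ mr * (mr - 1) * (mr - 2) * (mr - 3) := by
      apply mul_nonneg (mul_nonneg (mul_nonneg (by linarith) (by linarith)) (by linarith))
      linarith
    have hPm : mr * (mr - 1) * (mr - 2) * (mr - 3) ≤ mr ^ 4 := by
      have h1 : mr * (mr - 1) ≤ mr * mr := by nlinarith
      have h2 : (mr - 2) * (mr - 3) ≤ mr * mr := by nlinarith
      have h3 : (0:ℝ) ≤ (mr - 2) * (mr - 3) := by nlinarith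
      calc mr * (mr - 1) * (mr - 2) * (mr - 3)
          = (mr * (mr - 1)) * ((mr - 2) * (mr - 3)) := by ring
        _ ≤ (mr * mr) * (mr * mr) := mul_le_mul h1 h2 h3 (by nlinarith)
        _ = mr ^ 4 := by ring
    have hm3b : mr ^ 3 ≤ 1000 := by nlinarith
    have hm4b : mr ^ 4 ≤ 1000 * mr := by nlinarith
    have hdiv : mr * (mr - 1) * (mr - 2) * (mr - 3) / (8 * qr)
        ≤ mr * (mr - 1) * (mr - 2) * (mr - 3) / 8 :=
      div_le_div_of_nonneg_left hP0 (by norm_num) (by linarith)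
    have hmm : mr * (mr - 1) ≤ 9 * mr := by nlinarith
    have hlast : mr * (mr - 1) * (mr - 2) * (mr - 3) / 8 ≤ 1000 * mr / 8 := by
      apply div_le_div_of_nonneg_right ?_ (by norm_num)
      linarith [hPm, hm4b]
    rw [hch]
    linarith [hX]


variable {P L : Type} [Membership P L] [ProjectivePlane P L] [Fintype P] [Fintype L]
  [∀ (p : P) (l : L), Decidable (p ∈ l)] [DecidableEq P]

noncomputable def lineo (π : P ≃ L) (a b : P) : L :=
  if h : a ≠ b then HasLines.mkLine (P := P) (L := L) h else π a

lemma mem_lineo_left (π : P ≃ L) {a b : P} (h : a ≠ b) : a ∈ lineo π a b := by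
  rw [lineo, dif_pos h]; exact (HasLines.mkLine_ax h).1

lemma mem_lineo_right (π : P ≃ L) {a b : P} (h : a ≠ b) : b ∈ lineo π a b := by
  rw [lineo, dif_pos h]; exact (HasLines.mkLine_ax h).2

lemma lineo_unique (π : P ≃ L) {a b : P} (h : a ≠ b) {l : L} (ha : a ∈ l) (hb : b ∈ l) :
    l = lineo π a b :=
  ((Nondegenerate.eq_or_eq (P := P) (L := L) ha hb (mem_lineo_left π h)
    (mem_lineo_right π h)).resolve_left h)

noncomputable def pole (π : P ≃ L) (a b : P) : P := π.symm (lineo π a b)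

lemma pi_pole (π : P ≃ L) (a b : P) : π (pole π a b) = lineo π a b := Equiv.apply_symm_apply _ _

lemma lineo_symm (π : P ≃ L) {a b : P} (h : a ≠ b) : lineo π b a = lineo π a b :=
  lineo_unique π h (mem_lineo_right π h.symm) (mem_lineo_left π h.symm)

lemma pole_symm (π : P ≃ L) {a b : P} (h : a ≠ b) : pole π b a = pole π a b := by
  rw [pole, pole, lineo_symm π h]

def pr (π : P ≃ L) (H : Finset P) (x : P) : Finset P := H.filter (· ∈ π x)

lemma oval_line_eq (π : P ≃ L) (H : Finset P) (hov : ∀ l : L, (H.filter (· ∈ l)).card ≤ 2)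
    {a b : P} (ha : a ∈ H) (hb : b ∈ H) (h : a ≠ b) :
    H.filter (· ∈ lineo π a b) = {a, b} := by
  have hsub : ({a, b} : Finset P) ⊆ H.filter (· ∈ lineo π a b) := by
    intro x hx
    rcases Finset.mem_insert.mp hx with rfl | hx
    · exact Finset.mem_filter.mpr ⟨ha, mem_lineo_left π h⟩
    · rcases Finset.mem_singleton.mp hx with rfl
      exact Finset.mem_filter.mpr ⟨hb, mem_lineo_right π h⟩
  refine (Finset.eq_of_subset_of_card_le hsub ?_).symm
  calc (H.filter (· ∈ lineo π a b)).card ≤ 2 := hov _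
  _ = ({a,b} : Finset P).card := by rw [Finset.card_insert_of_notMem (by simpa using h),
      Finset.card_singleton]

lemma pr_pole (π : P ≃ L) (H : Finset P) (hov : ∀ l : L, (H.filter (· ∈ l)).card ≤ 2)
    {a b : P} (ha : a ∈ H) (hb : b ∈ H) (h : a ≠ b) :
    pr π H (pole π a b) = {a, b} := by
  rw [pr, pi_pole, oval_line_eq π H hov ha hb h]

lemma pole_inj (π : P ≃ L) (H : Finset P) (hov : ∀ l : L, (H.filter (· ∈ l)).card ≤ 2)
    {a b c d : P} (ha : a ∈ H) (hb : b ∈ H) (hc : c ∈ H) (hd : d ∈ H)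
    (hab : a ≠ b) (hcd : c ≠ d) (h : pole π a b = pole π c d) :
    ({a, b} : Finset P) = {c, d} := by
  rw [← pr_pole π H hov ha hb hab, h, pr_pole π H hov hc hd hcd]

lemma line_card (l : L) : (univ.filter (· ∈ l) : Finset P).card = ProjectivePlane.order P L + 1 := by
  have h := ProjectivePlane.pointCount_eq P l
  rw [pointCount, Nat.card_eq_fintype_card, Fintype.card_subtype] at h
  exact h

lemma lines_meet (l₁ l₂ : L) (h : l₁ ≠ l₂) :
    (univ.filter (fun v : P => v ∈ l₁ ∧ v ∈ l₂)).card = 1 := by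
  obtain ⟨p, hp, hu⟩ := HasPoints.existsUnique_point P L l₁ l₂ h
  rw [Finset.card_eq_one]
  refine ⟨p, ?_⟩
  ext x
  simp only [mem_filter, mem_univ, true_and, mem_singleton]
  exact ⟨fun hx => hu x hx, fun hx => hx ▸ hp⟩

lemma polar_card (π : P ≃ L) (hπ : ∀ p r : P, p ∈ π r ↔ r ∈ π p) (x : P) :
    (univ.filter (fun v : P => x ∈ π v)).card = ProjectivePlane.order P L + 1 := by
  have : (univ.filter (fun v : P => x ∈ π v)) = (univ.filter (· ∈ π x)) := by
    ext v; simp [hπ x v]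
  rw [this, line_card]

lemma S1 (π : P ≃ L) (hπ : ∀ p r : P, p ∈ π r ↔ r ∈ π p) (A : Finset P) :
    ∑ v : P, (A.filter (· ∈ π v)).card = A.card * (ProjectivePlane.order P L + 1) := by
  rw [show ∑ v : P, (A.filter (· ∈ π v)).card
      = ∑ v ∈ univ, (A.filter (fun x => x ∈ π v)).card from rfl,
    swap_count univ A (fun v x => x ∈ π v)]
  rw [Finset.sum_congr rfl fun x _ => polar_card π hπ x]
  rw [Finset.sum_const, smul_eq_mul]

lemma S2 (π : P ≃ L) (hπ : ∀ p r : P, p ∈ π r ↔ r ∈ π p) (A : Finset P) :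
    ∑ v : P, (A.filter (· ∈ π v)).card ^ 2
      = A.card ^ 2 + A.card * ProjectivePlane.order P L := by
  have hsq : ∀ v : P, (A.filter (· ∈ π v)).card ^ 2
      = ((A ×ˢ A).filter (fun p => p.1 ∈ π v ∧ p.2 ∈ π v)).card := by
    intro v
    rw [Finset.filter_product, Finset.card_product]
    ring
  simp_rw [hsq]
  rw [swap_count univ (A ×ˢ A) (fun v p => p.1 ∈ π v ∧ p.2 ∈ π v)]
  rw [← Finset.diag_union_offDiag A,
    Finset.sum_union (Finset.disjoint_diag_offDiag A)]
  have hdiag : ∀ p ∈ A.diag,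
      (univ.filter (fun v : P => p.1 ∈ π v ∧ p.2 ∈ π v)).card
        = ProjectivePlane.order P L + 1 := by
    intro p hp
    obtain ⟨h1, h2⟩ := Finset.mem_diag.mp hp
    have he : (univ.filter (fun v : P => p.1 ∈ π v ∧ p.2 ∈ π v))
        = (univ.filter (fun v : P => p.1 ∈ π v)) := by
      ext v; simp only [mem_filter, mem_univ, true_and]
      rw [← h2]; exact ⟨fun h => h.1, fun h => ⟨h, h⟩⟩
    rw [he]
    exact polar_card π hπ p.1
  have hoff : ∀ p ∈ A.offDiag,
      (univ.filter (fun v : P => p.1 ∈ π v ∧ p.2 ∈ π v)).card = 1 := by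
    intro p hp
    obtain ⟨h1, h2, h3⟩ := Finset.mem_offDiag.mp hp
    have he : (univ.filter (fun v : P => p.1 ∈ π v ∧ p.2 ∈ π v))
        = (univ.filter (fun v : P => v ∈ π p.1 ∧ v ∈ π p.2)) := by
      ext v; simp [hπ p.1 v, hπ p.2 v]
    rw [he]
    exact lines_meet _ _ (fun hc => h3 (π.injective hc))
  rw [Finset.sum_congr rfl hdiag, Finset.sum_congr rfl hoff,
    Finset.sum_const, Finset.sum_const, smul_eq_mul, smul_eq_mul,
    Finset.diag_card, Finset.offDiag_card]
  rcases Nat.eq_zero_or_pos A.card with h | h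
  · simp [h]
  · have hle : A.card ≤ A.card * A.card := Nat.le_mul_of_pos_left _ h
    zify [hle]
    ring

lemma mixing (π : P ≃ L) (hπ : ∀ p r : P, p ∈ π r ↔ r ∈ π p) (A : Finset P) :
    (∑ v ∈ A, ((A.filter (· ∈ π v)).card : ℝ))
      ≥ (A.card : ℝ) ^ 2 * ((ProjectivePlane.order P L : ℝ) + 1) / (Fintype.card P : ℝ)
        - (A.card : ℝ) * Real.sqrt (ProjectivePlane.order P L) := by
  set qn : ℕ := ProjectivePlane.order P L with hqn
  set q : ℝ := (qn : ℝ) with hq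
  have hNnat : Fintype.card P = qn ^ 2 + qn + 1 := ProjectivePlane.card_points P L
  set N : ℝ := (Fintype.card P : ℝ) with hN
  have hNval : N = q ^ 2 + q + 1 := by rw [hN, hNnat]; push_cast; ring
  have hNpos : 0 < N := by rw [hNval]; positivity
  have hq0 : 0 ≤ q := by positivity
  set α : ℝ := (A.card : ℝ) with hα
  have hα0 : 0 ≤ α := by positivity
  set d : P → ℝ := fun v => ((A.filter (· ∈ π v)).card : ℝ) with hd
  have hd0 : ∀ v, 0 ≤ d v := fun v => by positivity
  have hS1 : ∑ v : P, d v = α * (q + 1) := by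
    rw [hd, ← Nat.cast_sum]
    rw [S1 π hπ A]
    push_cast; ring
  have hS2 : ∑ v : P, (d v) ^ 2 = α ^ 2 + α * q := by
    have : ∀ v : P, (d v) ^ 2 = (((A.filter (· ∈ π v)).card ^ 2 : ℕ) : ℝ) := by
      intro v; push_cast; ring
    rw [Finset.sum_congr rfl fun v _ => this v, ← Nat.cast_sum, S2 π hπ A]
    push_cast; ring
  set c : ℝ := α * (q + 1) / N with hc
  have hvar : ∑ v : P, (c - d v) ^ 2 ≤ α * q := by
    have hexp : ∑ v : P, (c - d v) ^ 2
        = N * c ^ 2 - 2 * c * (α * (q + 1)) + (α ^ 2 + α * q) := by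
      have : ∀ v : P, (c - d v) ^ 2 = c ^ 2 - 2 * c * d v + (d v) ^ 2 := fun v => by ring
      rw [Finset.sum_congr rfl fun v _ => this v]
      rw [Finset.sum_add_distrib, Finset.sum_sub_distrib, ← Finset.mul_sum, hS1, hS2,
        Finset.sum_const, Finset.card_univ, nsmul_eq_mul, hN]
    rw [hexp, hc]
    have h1 : N * (α * (q + 1) / N) ^ 2 = α ^ 2 * (q + 1) ^ 2 / N := by
      field_simp
    have h2 : N ≤ (q + 1) ^ 2 := by rw [hNval]; nlinarith
    rw [h1]
    have h3 : α ^ 2 ≤ α ^ 2 * (q + 1) ^ 2 / N := by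
      rw [le_div_iff₀ hNpos]; nlinarith
    have h4 : 2 * (α * (q + 1) / N) * (α * (q + 1)) = 2 * (α ^ 2 * (q + 1) ^ 2 / N) := by
      field_simp
    linarith
  have hsub : ∑ v ∈ A, (c - d v) ^ 2 ≤ α * q :=
    le_trans (Finset.sum_le_sum_of_subset_of_nonneg (Finset.subset_univ A)
      (fun v _ _ => sq_nonneg _)) hvar
  have hCS : (∑ v ∈ A, (c - d v)) ^ 2 ≤ α * (α * q) := by
    calc (∑ v ∈ A, (c - d v)) ^ 2 ≤ A.card * ∑ v ∈ A, (c - d v) ^ 2 :=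
          sq_sum_le_card_mul_sum_sq
      _ ≤ α * (α * q) := by
          rw [← hα]
          exact mul_le_mul_of_nonneg_left hsub hα0
  have hsum : ∑ v ∈ A, (c - d v) = α * c - ∑ v ∈ A, d v := by
    rw [Finset.sum_sub_distrib, Finset.sum_const, nsmul_eq_mul, ← hα]
  set t : ℝ := ∑ v ∈ A, d v with ht
  have habs : α * c - t ≤ α * Real.sqrt q := by
    have h1 : (α * c - t) ^ 2 ≤ α ^ 2 * q := by rw [← hsum]; nlinarith [hCS]
    calc α * c - t ≤ |α * c - t| := le_abs_self _
      _ = Real.sqrt ((α * c - t) ^ 2) := (Real.sqrt_sq_eq_abs _).symm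
      _ ≤ Real.sqrt (α ^ 2 * q) := Real.sqrt_le_sqrt h1
      _ = α * Real.sqrt q := by
          rw [Real.sqrt_mul (sq_nonneg α), Real.sqrt_sq hα0]
  have : t ≥ α * c - α * Real.sqrt q := by linarith
  calc t ≥ α * c - α * Real.sqrt q := this
    _ = α ^ 2 * (q + 1) / N - α * Real.sqrt q := by rw [hc]; ring

noncomputable def Aset (π : P ≃ L) (H : Finset P) : Finset P :=
  H.offDiag.image (fun p => pole π p.1 p.2)

noncomputable def GP (π : P ≃ L) (H : Finset P) : Finset (P × P) :=
  ((Aset π H) ×ˢ (Aset π H)).filter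
    (fun p => p.2 ∈ π p.1 ∧ p.1 ∉ H ∧ p.2 ∉ H ∧ Disjoint (pr π H p.1) (pr π H p.2))

lemma mem_Aset_elim (π : P ≃ L) (H : Finset P) {x : P} (hx : x ∈ Aset π H) :
    ∃ a b, a ∈ H ∧ b ∈ H ∧ a ≠ b ∧ x = pole π a b := by
  obtain ⟨p, hp, hpx⟩ := Finset.mem_image.mp hx
  obtain ⟨h1, h2, h3⟩ := Finset.mem_offDiag.mp hp
  exact ⟨p.1, p.2, h1, h2, h3, hpx.symm⟩

lemma Aset_card_ub (π : P ≃ L) (H : Finset P) :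
    (Aset π H).card ≤ H.card * H.card - H.card :=
  le_trans Finset.card_image_le (le_of_eq (Finset.offDiag_card H))

lemma pole_fiber_le (π : P ≃ L) (H : Finset P)
    (hov : ∀ l : L, (H.filter (· ∈ l)).card ≤ 2) {S : Finset P} (hS : S ⊆ H) (x : P) :
    (S.offDiag.filter (fun p => pole π p.1 p.2 = x)).card ≤ 2 := by
  rcases Finset.eq_empty_or_nonempty (S.offDiag.filter (fun p => pole π p.1 p.2 = x))
    with he | ⟨⟨a, b⟩, hab⟩
  · rw [he]; simp
  · obtain ⟨habo, habx⟩ := Finset.mem_filter.mp hab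
    obtain ⟨ha, hb, hne⟩ := Finset.mem_offDiag.mp habo
    have hsub : S.offDiag.filter (fun p => pole π p.1 p.2 = x)
        ⊆ {(a, b), (b, a)} := by
      intro p hp
      obtain ⟨hpo, hpx⟩ := Finset.mem_filter.mp hp
      obtain ⟨hp1, hp2, hpne⟩ := Finset.mem_offDiag.mp hpo
      have heq : ({p.1, p.2} : Finset P) = {a, b} :=
        pole_inj π H hov (hS hp1) (hS hp2) (hS ha) (hS hb) hpne hne (by rw [hpx, habx])
      rcases pair_cases hpne heq with ⟨h1, h2⟩ | ⟨h1, h2⟩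
      · simp only [Finset.mem_insert, Finset.mem_singleton]
        left; exact Prod.ext h1.symm h2.symm
      · simp only [Finset.mem_insert, Finset.mem_singleton]
        right; exact Prod.ext h2.symm h1.symm
    exact le_trans (Finset.card_le_card hsub)
      (le_trans (Finset.card_insert_le _ _) (by simp))

lemma Aset_card_lb (π : P ≃ L) (H : Finset P)
    (hov : ∀ l : L, (H.filter (· ∈ l)).card ≤ 2) :
    H.card * H.card - H.card ≤ 2 * (Aset π H).card := by
  rw [← Finset.offDiag_card]
  exact Finset.card_le_mul_card_image _ 2
    (fun x _ => pole_fiber_le π H hov (le_refl H) x)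

lemma Dord_le_GP (π : P ≃ L) (hπ : ∀ p r : P, p ∈ π r ↔ r ∈ π p) (H : Finset P)
    (hHcard : H.card = ProjectivePlane.order P L + 1)
    (hov : ∀ l : L, (H.filter (· ∈ l)).card ≤ 2) :
    ∑ v ∈ Aset π H, ((Aset π H).filter (· ∈ π v)).card
      ≤ (GP π H).card + 5 * (ProjectivePlane.order P L + 1) ^ 2 := by
  set q : ℕ := ProjectivePlane.order P L with hq
  set A : Finset P := Aset π H with hA
  -- the full incidence set
  set full : Finset (P × P) := (A ×ˢ A).filter (fun p => p.2 ∈ π p.1) with hfull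
  have hDord : ∑ v ∈ A, (A.filter (· ∈ π v)).card = full.card := by
    rw [hfull, prod_count A A (fun v x => x ∈ π v)]
  set b1 : Finset (P × P) := (H ×ˢ (univ : Finset P)).filter (fun p => p.2 ∈ π p.1) with hb1
  set b2 : Finset (P × P) := ((univ : Finset P) ×ˢ H).filter (fun p => p.2 ∈ π p.1) with hb2
  set b3 : Finset (P × P) := H.biUnion (fun a =>
    ((univ : Finset P) ×ˢ (univ : Finset P)).filter
      (fun p => p.2 ∈ π p.1 ∧ p.1 ∈ π a ∧ p.2 ∈ π a)) with hb3
  have hsub : full ⊆ GP π H ∪ (b1 ∪ (b2 ∪ b3)) := by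
    intro p hp
    obtain ⟨hpA, hadj⟩ := Finset.mem_filter.mp hp
    obtain ⟨hp1, hp2⟩ := Finset.mem_product.mp hpA
    by_cases h1 : p.1 ∈ H
    · exact Finset.mem_union_right _ (Finset.mem_union_left _
        (Finset.mem_filter.mpr ⟨Finset.mem_product.mpr ⟨h1, Finset.mem_univ _⟩, hadj⟩))
    by_cases h2 : p.2 ∈ H
    · exact Finset.mem_union_right _ (Finset.mem_union_right _ (Finset.mem_union_left _
        (Finset.mem_filter.mpr ⟨Finset.mem_product.mpr ⟨Finset.mem_univ _, h2⟩, hadj⟩)))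
    by_cases h3 : Disjoint (pr π H p.1) (pr π H p.2)
    · exact Finset.mem_union_left _ (Finset.mem_filter.mpr ⟨hpA, hadj, h1, h2, h3⟩)
    · obtain ⟨a, ha1, ha2⟩ := Finset.not_disjoint_iff.mp h3
      obtain ⟨haH, hax⟩ := Finset.mem_filter.mp ha1
      obtain ⟨_, hay⟩ := Finset.mem_filter.mp ha2
      refine Finset.mem_union_right _ (Finset.mem_union_right _ (Finset.mem_union_right _ ?_))
      exact Finset.mem_biUnion.mpr ⟨a, haH, Finset.mem_filter.mpr
        ⟨Finset.mem_product.mpr ⟨Finset.mem_univ _, Finset.mem_univ _⟩, hadj,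
          (hπ a p.1).mp hax, (hπ a p.2).mp hay⟩⟩
  have hb1c : b1.card = (q + 1) * (q + 1) := by
    rw [hb1, prod_count H univ (fun a x => x ∈ π a)]
    rw [Finset.sum_congr rfl (fun a _ => line_card (π a))]
    rw [Finset.sum_const, smul_eq_mul, hHcard]
  have hb2c : b2.card ≤ 2 * (q * q + q + 1) := by
    rw [hb2, prod_count univ H (fun x y => y ∈ π x)]
    calc ∑ x ∈ univ, (H.filter (fun y => y ∈ π x)).card ≤ ∑ _x ∈ (univ : Finset P), 2 :=
        Finset.sum_le_sum (fun x _ => hov (π x))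
      _ = 2 * (q * q + q + 1) := by
        rw [Finset.sum_const, smul_eq_mul, Finset.card_univ, ProjectivePlane.card_points P L]
        rw [← hq]
        ring_nf
  have hb3c : b3.card ≤ (q + 1) * (2 * (q + 1)) := by
    rw [hb3]
    refine le_trans (Finset.card_biUnion_le) ?_
    have hper : ∀ a : P, (((univ : Finset P) ×ˢ (univ : Finset P)).filter
        (fun p => p.2 ∈ π p.1 ∧ p.1 ∈ π a ∧ p.2 ∈ π a)).card ≤ 2 * (q + 1) := by
      intro a
      set ba := ((univ : Finset P) ×ˢ (univ : Finset P)).filter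
        (fun p => p.2 ∈ π p.1 ∧ p.1 ∈ π a ∧ p.2 ∈ π a) with hba
      have hsplit : ba = ba.filter (fun p => p.1 = a) ∪ ba.filter (fun p => p.1 ≠ a) :=
        (Finset.filter_union_filter_not_eq _ ba).symm
      have hc1 : (ba.filter (fun p => p.1 = a)).card ≤ q + 1 := by
        rw [← line_card (π a)]
        apply Finset.card_le_card_of_injOn (fun p => p.2)
        · intro p hp
          obtain ⟨hpba, _⟩ := Finset.mem_filter.mp hp
          obtain ⟨_, ⟨_, _, h⟩⟩ := Finset.mem_filter.mp hpba
          exact Finset.mem_filter.mpr ⟨Finset.mem_univ _, h⟩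
        · intro p hp p' hp' hpp
          obtain ⟨_, h1⟩ := Finset.mem_filter.mp hp
          obtain ⟨_, h1'⟩ := Finset.mem_filter.mp hp'
          exact Prod.ext (h1.trans h1'.symm) hpp
      have hc2 : (ba.filter (fun p => p.1 ≠ a)).card ≤ q + 1 := by
        rw [← line_card (π a)]
        apply Finset.card_le_card_of_injOn (fun p => p.1)
        · intro p hp
          obtain ⟨hpba, _⟩ := Finset.mem_filter.mp hp
          obtain ⟨_, ⟨_, h, _⟩⟩ := Finset.mem_filter.mp hpba
          exact Finset.mem_filter.mpr ⟨Finset.mem_univ _, h⟩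
        · intro p hp p' hp' hpp
          obtain ⟨hpba, hne⟩ := Finset.mem_filter.mp hp
          obtain ⟨hpba', hne'⟩ := Finset.mem_filter.mp hp'
          obtain ⟨_, hy, _, hya⟩ := Finset.mem_filter.mp hpba
          obtain ⟨_, hy', _, hya'⟩ := Finset.mem_filter.mp hpba'
          have hyx : p'.2 ∈ π p.1 := by rw [show p.1 = p'.1 from hpp]; exact hy'
          have hlines : π p.1 ≠ π a := fun hc => hne (π.injective hc)
          have := Nondegenerate.eq_or_eq (P := P) (L := L) hy hyx hya hya'
          exact Prod.ext hpp (this.resolve_right hlines)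
      have hs : ba.card ≤ (ba.filter (fun p => p.1 = a)).card
          + (ba.filter (fun p => p.1 ≠ a)).card := by
        conv_lhs => rw [hsplit]
        exact Finset.card_union_le _ _
      omega
    calc ∑ a ∈ H, (((univ : Finset P) ×ˢ (univ : Finset P)).filter
          (fun p => p.2 ∈ π p.1 ∧ p.1 ∈ π a ∧ p.2 ∈ π a)).card
        ≤ ∑ _a ∈ H, 2 * (q + 1) := Finset.sum_le_sum (fun a _ => hper a)
      _ = (q + 1) * (2 * (q + 1)) := by rw [Finset.sum_const, smul_eq_mul, hHcard]
  have hfin : full.card ≤ (GP π H).card + (b1.card + (b2.card + b3.card)) := by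
    refine le_trans (Finset.card_le_card hsub) ?_
    refine le_trans (Finset.card_union_le _ _) ?_
    refine Nat.add_le_add_left ?_ _
    refine le_trans (Finset.card_union_le _ _) ?_
    exact Nat.add_le_add_left (Finset.card_union_le _ _) _
  rw [hDord]
  have : b1.card + (b2.card + b3.card) ≤ 5 * (q + 1) ^ 2 := by
    have h2 : q * q + q + 1 ≤ (q + 1) ^ 2 := by nlinarith
    nlinarith [hb1c, hb2c, hb3c]
  omega


lemma pr_card_two (π : P ≃ L) (H : Finset P)
    (hov : ∀ l : L, (H.filter (· ∈ l)).card ≤ 2) {x : P} (hx : x ∈ Aset π H) :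
    (pr π H x).card = 2 := by
  obtain ⟨a, b, ha, hb, hab, rfl⟩ := mem_Aset_elim π H hx
  rw [pr_pole π H hov ha hb hab]
  rw [Finset.card_insert_of_notMem (by simpa using hab), Finset.card_singleton]

lemma prB (π : P ≃ L) (H : Finset P)
    (hov : ∀ l : L, (H.filter (· ∈ l)).card ≤ 2) {p : P × P} (hp : p ∈ GP π H) :
    (pr π H p.1 ∪ pr π H p.2) ⊆ H ∧ (pr π H p.1 ∪ pr π H p.2).card = 4 := by
  obtain ⟨hpA, _, _, _, hdisj⟩ := Finset.mem_filter.mp hp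
  obtain ⟨h1, h2⟩ := Finset.mem_product.mp hpA
  constructor
  · exact Finset.union_subset (Finset.filter_subset _ _) (Finset.filter_subset _ _)
  · rw [Finset.card_union_of_disjoint hdisj, pr_card_two π H hov h1, pr_card_two π H hov h2]

lemma averaging (π : P ≃ L) (H : Finset P)
    (hov : ∀ l : L, (H.filter (· ∈ l)).card ≤ 2) (m : ℕ) (h4 : 4 ≤ m) :
    ∑ S ∈ Finset.powersetCard m H,
        ((GP π H).filter (fun p => pr π H p.1 ⊆ S ∧ pr π H p.2 ⊆ S)).card
      = (GP π H).card * (H.card - 4).choose (m - 4) := by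
  rw [swap_count (Finset.powersetCard m H) (GP π H)
    (fun S p => pr π H p.1 ⊆ S ∧ pr π H p.2 ⊆ S)]
  have hinner : ∀ p ∈ GP π H,
      ((Finset.powersetCard m H).filter
        (fun S => pr π H p.1 ⊆ S ∧ pr π H p.2 ⊆ S)).card
      = (H.card - 4).choose (m - 4) := by
    intro p hp
    obtain ⟨hBH, hB4⟩ := prB π H hov hp
    have hcond : ∀ S : Finset P, (pr π H p.1 ⊆ S ∧ pr π H p.2 ⊆ S)
        ↔ (pr π H p.1 ∪ pr π H p.2) ⊆ S := fun S => (Finset.union_subset_iff).symm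
    rw [Finset.filter_congr (fun S _ => by rw [hcond S])]
    rw [card_powersetCard_superset H _ m hBH (hB4 ▸ h4), hB4]
  rw [Finset.sum_congr rfl hinner, Finset.sum_const, smul_eq_mul]

lemma exists_good_S (π : P ≃ L) (H : Finset P)
    (hov : ∀ l : L, (H.filter (· ∈ l)).card ≤ 2) (m : ℕ) (h4 : 4 ≤ m) (hmH : m ≤ H.card) :
    ∃ S ∈ Finset.powersetCard m H,
      (GP π H).card * (H.card - 4).choose (m - 4)
        ≤ H.card.choose m *
          ((GP π H).filter (fun p => pr π H p.1 ⊆ S ∧ pr π H p.2 ⊆ S)).card := by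
  have hne : (Finset.powersetCard m H).Nonempty := Finset.powersetCard_nonempty.mpr hmH
  obtain ⟨S₀, hS₀, hmax⟩ := Finset.exists_max_image (Finset.powersetCard m H)
    (fun S => ((GP π H).filter (fun p => pr π H p.1 ⊆ S ∧ pr π H p.2 ⊆ S)).card) hne
  refine ⟨S₀, hS₀, ?_⟩
  calc (GP π H).card * (H.card - 4).choose (m - 4)
      = ∑ S ∈ Finset.powersetCard m H,
          ((GP π H).filter (fun p => pr π H p.1 ⊆ S ∧ pr π H p.2 ⊆ S)).card :=
        (averaging π H hov m h4).symm
    _ ≤ (Finset.powersetCard m H).card •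
          ((GP π H).filter (fun p => pr π H p.1 ⊆ S₀ ∧ pr π H p.2 ⊆ S₀)).card :=
        Finset.sum_le_card_nsmul _ _ _ (fun S hS => hmax S hS)
    _ = H.card.choose m * _ := by rw [smul_eq_mul, Finset.card_powersetCard]


/-- The whole edge-count lemma for a chosen `S`. -/
lemma edges_count (π : P ≃ L) (hπ : ∀ p r : P, p ∈ π r ↔ r ∈ π p) (H : Finset P)
    (hov : ∀ l : L, (H.filter (· ∈ l)).card ≤ 2)
    (S : Finset P) (hS : S ⊆ H) (m : ℕ) (hScard : S.card = m) :
    ∃ T : Finset P, T.card ≤ m + m.choose 2 ∧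
      ∀ (E : Finset (Sym2 P)),
        (∀ x y : P, x ∈ π y → (∀ v ∈ s(x,y), v ∈ T) → s(x,y) ∈ E) →
        2 * (m * (m - 1)) +
          ((GP π H).filter (fun p => pr π H p.1 ⊆ S ∧ pr π H p.2 ⊆ S)).card
          ≤ 2 * E.card + 4 * m := by
  classical
  set PS : Finset P := S.offDiag.image (fun p => pole π p.1 p.2) with hPS
  have hPScard : PS.card ≤ m.choose 2 := by
    have h2 : 2 * PS.card ≤ S.offDiag.card := by
      apply Finset.mul_card_image_le_card
      intro x hx
      obtain ⟨p, hp, hpx⟩ := Finset.mem_image.mp hx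
      obtain ⟨h1, h2, h3⟩ := Finset.mem_offDiag.mp hp
      have hmem : (p.2, p.1) ∈ S.offDiag.filter (fun r => pole π r.1 r.2 = x) := by
        refine Finset.mem_filter.mpr ⟨Finset.mem_offDiag.mpr ⟨h2, h1, h3.symm⟩, ?_⟩
        rw [pole_symm π h3]; exact hpx
      have hmem' : (p.1, p.2) ∈ S.offDiag.filter (fun r => pole π r.1 r.2 = x) := by
        exact Finset.mem_filter.mpr ⟨hp, hpx⟩
      have hsub : {(p.1, p.2), (p.2, p.1)} ⊆
          S.offDiag.filter (fun r => pole π r.1 r.2 = x) := by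
        intro r hr
        rcases Finset.mem_insert.mp hr with rfl | hr
        · exact hmem'
        · rcases Finset.mem_singleton.mp hr with rfl
          exact hmem
      have hcard2 : ({(p.1, p.2), (p.2, p.1)} : Finset (P × P)).card = 2 := by
        rw [Finset.card_insert_of_notMem, Finset.card_singleton]
        simp only [Finset.mem_singleton]
        intro hc
        exact h3 ((Prod.ext_iff.mp hc).1.symm ▸ (Prod.ext_iff.mp hc).1 ▸ congrArg Prod.fst hc ▸ rfl)
      calc 2 = ({(p.1, p.2), (p.2, p.1)} : Finset (P × P)).card := hcard2.symm
        _ ≤ _ := Finset.card_le_card hsub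
    rw [Finset.offDiag_card, hScard, mm_aux, ← two_mul_choose_two] at h2
    omega
  refine ⟨S ∪ PS, ?_, ?_⟩
  · calc (S ∪ PS).card ≤ S.card + PS.card := Finset.card_union_le _ _
      _ ≤ m + m.choose 2 := by rw [hScard]; omega
  intro E hE
  set Y := ((GP π H).filter (fun p => pr π H p.1 ⊆ S ∧ pr π H p.2 ⊆ S)).card with hY
  set D1 : Finset (P × P) := S.offDiag.filter (fun p => pole π p.1 p.2 ∉ S) with hD1
  set E1 : Finset (Sym2 P) := D1.image (fun p => s(pole π p.1 p.2, p.1)) with hE1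
  set G2 : Finset (P × P) := (GP π H).filter
    (fun p => pr π H p.1 ⊆ S ∧ pr π H p.2 ⊆ S) with hG2
  set E2 : Finset (Sym2 P) := G2.image (fun p => s(p.1, p.2)) with hE2
  -- E1 cardinality
  have hE1card : E1.card = D1.card := by
    rw [hE1]
    apply Finset.card_image_of_injOn
    intro p hp p' hp' heq
    obtain ⟨hpo, hpno⟩ := Finset.mem_filter.mp hp
    obtain ⟨hp1, hp2, hpne⟩ := Finset.mem_offDiag.mp hpo
    obtain ⟨hpo', hpno'⟩ := Finset.mem_filter.mp hp'
    obtain ⟨hp1', hp2', hpne'⟩ := Finset.mem_offDiag.mp hpo'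
    rcases Sym2.eq_iff.mp heq with ⟨h1, h2⟩ | ⟨h1, h2⟩
    · -- poles equal and first coords equal
      have hpair := pole_inj π H hov (hS hp1) (hS hp2) (hS hp1') (hS hp2') hpne hpne' h1
      rcases pair_cases hpne hpair with ⟨ha, hb⟩ | ⟨ha, hb⟩
      · exact Prod.ext ha.symm hb.symm
      · exact absurd (h2.trans ha) hpne
    · exfalso; exact hpno (h1 ▸ hp1')
  have hbad : (S.offDiag.filter (fun p => pole π p.1 p.2 ∈ S)).card ≤ 2 * m := by
    rw [← hScard]
    apply Finset.card_le_mul_card_image_of_maps_to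
      (f := fun p : P × P => pole π p.1 p.2) (t := S)
    · intro p hp; exact (Finset.mem_filter.mp hp).2
    · intro b _
      refine le_trans (Finset.card_le_card ?_) (pole_fiber_le π H hov hS b)
      intro p hp
      obtain ⟨hp1, hp2⟩ := Finset.mem_filter.mp hp
      exact Finset.mem_filter.mpr ⟨(Finset.mem_filter.mp hp1).1, hp2⟩
  have hE1lb : m * (m - 1) ≤ E1.card + 2 * m := by
    have hsplit := Finset.card_filter_add_card_filter_not
      (s := S.offDiag) (p := fun p => pole π p.1 p.2 ∈ S)
    have hoc : S.offDiag.card = m * (m - 1) := by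
      rw [Finset.offDiag_card, hScard, mm_aux]
    rw [hE1card, hD1]
    have : (S.offDiag.filter (fun p => pole π p.1 p.2 ∉ S)).card
        + (S.offDiag.filter (fun p => pole π p.1 p.2 ∈ S)).card = m * (m-1) := by
      omega
    omega
  -- E2 cardinality
  have hE2lb : Y ≤ 2 * E2.card :=
    Finset.card_le_mul_card_image G2 2 (fun e _ => sym2_fiber_le G2 e)
  -- disjointness
  have hdisj : Disjoint E1 E2 := by
    rw [Finset.disjoint_left]
    intro e he1 he2
    obtain ⟨p, hp, hpe⟩ := Finset.mem_image.mp he1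
    obtain ⟨r, hr, hre⟩ := Finset.mem_image.mp he2
    obtain ⟨hrGP, _, _⟩ := Finset.mem_filter.mp hr
    obtain ⟨_, _, hr1H, hr2H, _⟩ := Finset.mem_filter.mp hrGP
    have hp1S : p.1 ∈ S := (Finset.mem_offDiag.mp (Finset.mem_filter.mp hp).1).1
    have hp1e : p.1 ∈ e := by rw [← hpe]; exact Sym2.mem_mk_right _ _
    have : p.1 ∈ s(r.1, r.2) := by rw [hre]; exact hp1e
    rcases Sym2.mem_iff.mp this with h | h
    · exact hr1H (h ▸ hS hp1S)
    · exact hr2H (h ▸ hS hp1S)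
  -- both edge sets are in E
  have hsubE : E1 ∪ E2 ⊆ E := by
    intro e he
    rcases Finset.mem_union.mp he with he1 | he2
    · obtain ⟨p, hp, hpe⟩ := Finset.mem_image.mp he1
      obtain ⟨hpo, hpno⟩ := Finset.mem_filter.mp hp
      obtain ⟨hp1, hp2, hpne⟩ := Finset.mem_offDiag.mp hpo
      rw [← hpe]
      apply hE
      · exact (hπ (pole π p.1 p.2) p.1).mpr
          (by rw [pi_pole]; exact mem_lineo_left π hpne)
      · intro v hv
        rcases Sym2.mem_iff.mp hv with rfl | rfl
        · exact Finset.mem_union_right _ (Finset.mem_image.mpr ⟨p, hpo, rfl⟩)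
        · exact Finset.mem_union_left _ hp1
    · obtain ⟨r, hr, hre⟩ := Finset.mem_image.mp he2
      obtain ⟨hrGP, hpr1, hpr2⟩ := Finset.mem_filter.mp hr
      obtain ⟨hrA, hadj, hr1H, hr2H, _⟩ := Finset.mem_filter.mp hrGP
      obtain ⟨hr1A, hr2A⟩ := Finset.mem_product.mp hrA
      rw [← hre]
      apply hE
      · exact (hπ r.1 r.2).mpr hadj
      · have hmemT : ∀ x : P, x ∈ Aset π H → pr π H x ⊆ S → x ∈ S ∪ PS := by
          intro x hxA hxS
          obtain ⟨a, b, ha, hb, hab, rfl⟩ := mem_Aset_elim π H hxA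
          rw [pr_pole π H hov ha hb hab] at hxS
          have haS : a ∈ S := hxS (by simp)
          have hbS : b ∈ S := hxS (by simp)
          refine Finset.mem_union_right _ (Finset.mem_image.mpr ⟨(a, b), ?_, rfl⟩)
          exact Finset.mem_offDiag.mpr ⟨haS, hbS, hab⟩
        intro v hv
        rcases Sym2.mem_iff.mp hv with rfl | rfl
        · exact hmemT r.1 hr1A hpr1
        · exact hmemT r.2 hr2A hpr2
  have hcount : E1.card + E2.card ≤ E.card := by
    rw [← Finset.card_union_of_disjoint hdisj]
    exact Finset.card_le_card hsubE
  omega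


end PolarityAux

open PolarityAux Configuration



/-- Main theorem: there is an absolute constant `C > 0` such that for every projective plane
of order `q` with a polarity `π` and an oval `H`, and every `m ∈ {1, …, q + 1}`, the polarity
graph contains a subgraph on at most `m + C(m, 2)` vertices with at least
`2 C(m, 2) + m(m-1)(m-2)(m-3)/(8q) - C (m⁴ / q^(3/2) + m)` edges. -/
theorem dense_subgraph_of_polarity_graph :
    ∃ C : ℝ, 0 < C ∧
      ∀ (P L : Type) [Membership P L] [ProjectivePlane P L] [Fintype P] [Fintype L]
        [∀ (p : P) (l : L), Decidable (p ∈ l)] [DecidableEq P]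
        (q : ℕ), ProjectivePlane.order P L = q →
      ∀ (π : P ≃ L) (hπ : ∀ p r : P, p ∈ π r ↔ r ∈ π p)
        (H : Finset P), H.card = q + 1 →
        (∀ l : L, (H.filter (· ∈ l)).card ≤ 2) →
      ∀ m : ℕ, 1 ≤ m → m ≤ q + 1 →
      ∃ T : Finset P, T.card ≤ m + m.choose 2 ∧
        ((Finset.univ.filter (fun e : Sym2 P =>
            e ∈ Sym2.fromRel (r := fun a b : P => a ∈ π b) ⟨by intro a b h; exact (hπ a b).mp h⟩ ∧
            ∀ v ∈ e, v ∈ T)).card : ℝ) ≥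
          2 * (m.choose 2 : ℝ) +
            (m : ℝ) * ((m : ℝ) - 1) * ((m : ℝ) - 2) * ((m : ℝ) - 3) / (8 * q) -
            C * ((m : ℝ) ^ 4 / (q : ℝ) ^ ((3 : ℝ) / 2) + m) := by
  classical
  refine ⟨2000, by norm_num, ?_⟩
  intro P L _ _ _ _ _ _ q hq π hπ H hHcard hov m hm1 hm2
  by_cases hcase : 4 ≤ m ∧ 10 ≤ q
  · obtain ⟨hm4, hq10⟩ := hcase
    have hHc' : H.card = ProjectivePlane.order P L + 1 := by rw [hq]; exact hHcard
    have hmH : m ≤ H.card := by rw [hHcard]; omega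
    obtain ⟨S, hSmem, havgN⟩ := exists_good_S π H hov m hm4 hmH
    obtain ⟨hSsub, hScard⟩ := Finset.mem_powersetCard.mp hSmem
    obtain ⟨T, hTc, hTb⟩ := edges_count π hπ H hov S hSsub m hScard
    refine ⟨T, hTc, ?_⟩
    have hEmem : ∀ x y : P, x ∈ π y → (∀ v ∈ s(x,y), v ∈ T) →
        s(x,y) ∈ (Finset.univ.filter (fun e : Sym2 P =>
          e ∈ Sym2.fromRel (r := fun a b : P => a ∈ π b) ⟨by intro a b h; exact (hπ a b).mp h⟩ ∧
          ∀ v ∈ e, v ∈ T)) := by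
      intro x y hxy hv
      exact Finset.mem_filter.mpr ⟨Finset.mem_univ _, Sym2.fromRel_prop.mpr hxy, hv⟩
    have hkeyN := hTb _ hEmem
    have he4 : q + 1 - 4 = q - 3 := by omega
    rw [hHcard, he4] at havgN
    have hDleN := Dord_le_GP π hπ H hHc' hov
    rw [hq] at hDleN
    have hmixR := mixing π hπ (Aset π H)
    rw [hq] at hmixR
    have hAub := Aset_card_ub π H
    rw [hHcard] at hAub
    have hAlb := Aset_card_lb π H hov
    rw [hHcard] at hAlb
    have hidN := choose_id q m hm4 hq10
    have hNnat : Fintype.card P = q ^ 2 + q + 1 := by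
      have h := ProjectivePlane.card_points P L; rw [hq] at h; exact h
    -- real notation
    have hq0 : (0:ℝ) < (q:ℝ) := by exact_mod_cast (by omega : 0 < q)
    have hq10r : (10:ℝ) ≤ (q:ℝ) := by exact_mod_cast hq10
    have hm4r : (4:ℝ) ≤ (m:ℝ) := by exact_mod_cast hm4
    have hs2 : (Real.sqrt q) ^ 2 = (q:ℝ) := Real.sq_sqrt hq0.le
    have hs0 : (0:ℝ) ≤ Real.sqrt q := Real.sqrt_nonneg _
    have hrp : (q:ℝ) ^ ((3:ℝ)/2) = (q:ℝ) * Real.sqrt q := by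
      have h32 : (q:ℝ) ^ ((3:ℝ)/2) = (q:ℝ) ^ ((1:ℝ) + 1/2) := by norm_num
      rw [h32, Real.rpow_add hq0, Real.rpow_one, ← Real.sqrt_eq_rpow]
    have hNval : ((Fintype.card P : ℕ) : ℝ) = (q:ℝ) ^ 2 + (q:ℝ) + 1 := by
      rw [hNnat]; push_cast; ring
    -- key counting inequality, real form
    have hkeyR : 2 * ((m:ℝ) * ((m:ℝ) - 1)) +
        (((GP π H).filter (fun p => pr π H p.1 ⊆ S ∧ pr π H p.2 ⊆ S)).card : ℝ)
        ≤ 2 * ((Finset.univ.filter (fun e : Sym2 P =>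
            e ∈ Sym2.fromRel (r := fun a b : P => a ∈ π b) ⟨by intro a b h; exact (hπ a b).mp h⟩ ∧
            ∀ v ∈ e, v ∈ T)).card : ℝ) + 4 * (m:ℝ) := by
      have h := hkeyN
      have h1 : (1:ℕ) ≤ m := by omega
      zify [h1] at h
      exact_mod_cast h
    -- averaging, real form
    have havgR : ((GP π H).card : ℝ) * (((q-3).choose (m-4) : ℕ) : ℝ)
        ≤ (((q+1).choose m : ℕ) : ℝ) *
          (((GP π H).filter (fun p => pr π H p.1 ⊆ S ∧ pr π H p.2 ⊆ S)).card : ℝ) := by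
      exact_mod_cast havgN
    -- GP lower bound, real form
    have hGPr : ((GP π H).card : ℝ)
        ≥ ((Aset π H).card : ℝ) ^ 2 * ((q:ℝ) + 1) / ((Fintype.card P : ℕ) : ℝ)
          - ((Aset π H).card : ℝ) * Real.sqrt q - 5 * ((q:ℝ) + 1) ^ 2 := by
      have h1 : ((∑ v ∈ Aset π H, ((Aset π H).filter (· ∈ π v)).card : ℕ) : ℝ)
          ≤ ((GP π H).card : ℝ) + 5 * ((q:ℝ) + 1) ^ 2 := by
        exact_mod_cast hDleN
      rw [Nat.cast_sum] at h1
      linarith [hmixR, h1]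
    -- Aset bounds, real form
    have hale : (q:ℝ) + 1 ≤ ((q:ℝ) + 1) * ((q:ℝ) + 1) := by nlinarith
    have hAlbR : (q:ℝ) * ((q:ℝ) + 1) ≤ 2 * ((Aset π H).card : ℝ) := by
      have h := hAlb
      have h1 : q + 1 ≤ (q+1) * (q+1) := Nat.le_mul_of_pos_left _ (by omega)
      zify [h1] at h
      have h2 : ((q:ℝ) + 1) * ((q:ℝ) + 1) - ((q:ℝ) + 1) = (q:ℝ) * ((q:ℝ) + 1) := by ring
      have h3 : ((q:ℝ) + 1) * ((q:ℝ) + 1) - ((q:ℝ) + 1) ≤ 2 * ((Aset π H).card : ℝ) := by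
        exact_mod_cast h
      linarith
    have hAubR : ((Aset π H).card : ℝ) ≤ (q:ℝ) * ((q:ℝ) + 1) := by
      have h := hAub
      have h1 : q + 1 ≤ (q+1) * (q+1) := Nat.le_mul_of_pos_left _ (by omega)
      zify [h1] at h
      have h3 : ((Aset π H).card : ℝ) ≤ ((q:ℝ) + 1) * ((q:ℝ) + 1) - ((q:ℝ) + 1) := by
        exact_mod_cast h
      nlinarith
    -- choose identity, real form
    have hidR : (((q-3).choose (m-4) : ℕ) : ℝ) *
          (((q:ℝ)+1) * (q:ℝ) * ((q:ℝ)-1) * ((q:ℝ)-2))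
        = (((q+1).choose m : ℕ) : ℝ) *
          ((m:ℝ) * ((m:ℝ)-1) * ((m:ℝ)-2) * ((m:ℝ)-3)) := by
      have h := hidN
      zify [show 1 ≤ q by omega, show 2 ≤ q by omega, show 1 ≤ m by omega,
        show 2 ≤ m by omega, show 3 ≤ m by omega] at h
      exact_mod_cast h
    have hbpos : (0:ℝ) < (((q+1).choose m : ℕ) : ℝ) := by
      exact_mod_cast Nat.choose_pos (show m ≤ q + 1 by omega)
    have hend := endgame (m:ℝ) (q:ℝ) (Real.sqrt q)
      (((Finset.univ.filter (fun e : Sym2 P =>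
          e ∈ Sym2.fromRel (r := fun a b : P => a ∈ π b) ⟨by intro a b h; exact (hπ a b).mp h⟩ ∧
          ∀ v ∈ e, v ∈ T)).card : ℝ))
      ((((GP π H).filter (fun p => pr π H p.1 ⊆ S ∧ pr π H p.2 ⊆ S)).card : ℝ))
      (((GP π H).card : ℝ)) (((Aset π H).card : ℝ))
      ((((q-3).choose (m-4) : ℕ) : ℝ)) ((((q+1).choose m : ℕ) : ℝ))
      (((Fintype.card P : ℕ) : ℝ))
      ((m:ℝ) * ((m:ℝ) - 1) * ((m:ℝ) - 2) * ((m:ℝ) - 3))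
      ((q:ℝ) ^ ((3:ℝ)/2))
      hm4r hq10r hs2 hs0 hrp hNval rfl hkeyR havgR
      (Nat.cast_nonneg _) (Nat.cast_nonneg _) hbpos hGPr hAlbR hAubR hidR
    have hch := choose_two_cast m (by omega)
    linarith [hend]
  · refine ⟨∅, by simp, ?_⟩
    exact le_trans (trivial_case m q hm1 hm2 (by omega)) (Nat.cast_nonneg _)
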